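/- arXiv:2212.07825 — 2 statements merged into one kernel-verified Lean document; each statement's English description precedes it below -/
import Mathlib

section
/- If A ⊆ ℝ^N is closed and nonempty, x ∉ A, the distance function dist(·,A) is differentiable at x, and y ∈ A is a point with dist(x,A) = |x−y|, then ∇dist(x,A) = (x−y)/|x−y|; in particular |∇dist(x,A)| = 1. -/
open Metric InnerProductSpace

/-- If `A ⊆ ℝ^N` is closed and nonempty, `x ∉ A`, `dist(·,A)` is differentiable at `x`,
and `y ∈ A` realizes the distance, then `∇dist(x,A) = (x−y)/|x−y|`; in particular its
norm is `1`. -/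
theorem stmt_1 (N : ℕ) (A : Set (EuclideanSpace ℝ (Fin N)))
    (hA : IsClosed A) (hne : A.Nonempty) (x : EuclideanSpace ℝ (Fin N))
    (hx : x ∉ A)
    (hdiff : DifferentiableAt ℝ (fun z => Metric.infDist z A) x)
    (y : EuclideanSpace ℝ (Fin N)) (hy : y ∈ A)
    (hxy : Metric.infDist x A = ‖x - y‖) :
    gradient (fun z => Metric.infDist z A) x = ‖x - y‖⁻¹ • (x - y) ∧
      ‖gradient (fun z => Metric.infDist z A) x‖ = 1 := by
  set f : EuclideanSpace ℝ (Fin N) → ℝ := fun z => Metric.infDist z A with hf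
  set g := gradient f x with hg
  have hxne : x ≠ y := fun h => hx (h ▸ hy)
  have hpos : 0 < ‖x - y‖ := by simpa [sub_eq_zero] using hxne
  have hgrad : HasGradientAt f g x := hdiff.hasGradientAt
  have hfd : HasFDerivAt f (InnerProductSpace.toDual ℝ _ g) x := hgrad
  -- norm of gradient ≤ 1
  have hlip : LipschitzWith 1 f := lipschitz_infDist_pt A
  have hgle : ‖g‖ ≤ 1 := by
    have h1 : ‖fderiv ℝ f x‖ ≤ (1:ℝ) := by
      simpa using norm_fderiv_le_of_lipschitz ℝ (x₀ := x) hlip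
    rwa [hfd.fderiv, LinearIsometryEquiv.norm_map] at h1
  -- directional derivative along segment
  have hline : HasDerivAt (fun t : ℝ => f (x + t • (y - x)))
      (InnerProductSpace.toDual ℝ _ g (y - x)) 0 := by
    have h1 : HasDerivAt (fun t : ℝ => x + t • (y - x)) (y - x) 0 := by
      simpa using ((hasDerivAt_id (0:ℝ)).smul_const (y - x)).const_add x
    have hfd' : HasFDerivAt f (InnerProductSpace.toDual ℝ _ g)
        ((fun t : ℝ => x + t • (y - x)) 0) := by simpa using hfd
    have h2 := hfd'.comp_hasDerivAt 0 h1
    exact h2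
  have hseg : ∀ t ∈ Set.Icc (0:ℝ) 1, f (x + t • (y - x)) = ‖x - y‖ - t * ‖x - y‖ := by
    intro t ht
    obtain ⟨ht0, ht1⟩ := ht
    set z := x + t • (y - x) with hz
    have hzy : ‖z - y‖ = (1 - t) * ‖x - y‖ := by
      have : z - y = (1 - t) • (x - y) := by simp only [hz]; module
      rw [this, norm_smul]
      simp [abs_of_nonneg (by linarith : (0:ℝ) ≤ 1 - t)]
    have hxz : ‖x - z‖ = t * ‖x - y‖ := by
      have : x - z = t • (x - y) := by simp only [hz]; module
      rw [this, norm_smul]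
      simp [abs_of_nonneg ht0]
    have hle : f z ≤ (1 - t) * ‖x - y‖ := by
      have := Metric.infDist_le_dist_of_mem (x := z) hy
      rwa [dist_eq_norm, hzy] at this
    have hge : ‖x - y‖ - t * ‖x - y‖ ≤ f z := by
      have h2 := Metric.infDist_le_infDist_add_dist (x := x) (y := z) (s := A)
      rw [dist_eq_norm, hxz] at h2
      show ‖x - y‖ - t * ‖x - y‖ ≤ Metric.infDist z A
      have hxy' : Metric.infDist x A = ‖x - y‖ := hxy
      linarith
    have hlef : f z ≤ ‖x - y‖ - t * ‖x - y‖ := by linarith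
    exact le_antisymm hlef hge
  -- derivative on Icc
  have hUD : UniqueDiffWithinAt ℝ (Set.Icc (0:ℝ) 1) 0 :=
    uniqueDiffOn_Icc zero_lt_one 0 ⟨le_refl 0, zero_le_one⟩
  have haff : HasDerivWithinAt (fun t : ℝ => ‖x - y‖ - t * ‖x - y‖) (-‖x - y‖)
      (Set.Icc (0:ℝ) 1) 0 := by
    have : HasDerivAt (fun t : ℝ => ‖x - y‖ - t * ‖x - y‖) (-‖x - y‖) 0 := by
      exact (((hasDerivAt_id (0:ℝ)).mul_const ‖x - y‖).const_sub ‖x - y‖).congr_deriv (by simp)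
    exact this.hasDerivWithinAt
  have hW' : HasDerivWithinAt (fun t : ℝ => ‖x - y‖ - t * ‖x - y‖)
      (InnerProductSpace.toDual ℝ _ g (y - x)) (Set.Icc (0:ℝ) 1) 0 := by
    refine hline.hasDerivWithinAt.congr (fun t ht => (hseg t ht).symm) ?_
    simpa using (hseg 0 ⟨le_refl 0, zero_le_one⟩).symm
  have hderiv_eq : InnerProductSpace.toDual ℝ _ g (y - x) = -‖x - y‖ := by
    rw [← hW'.derivWithin hUD, haff.derivWithin hUD]
  have hinner : (inner ℝ g (x - y) : ℝ) = ‖x - y‖ := by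
    have h1 : (inner ℝ g (y - x) : ℝ) = -‖x - y‖ := by
      simpa [InnerProductSpace.toDual_apply_apply] using hderiv_eq
    have h2 : (inner ℝ g (x - y) : ℝ) = -(inner ℝ g (y - x) : ℝ) := by
      rw [← neg_sub y x, inner_neg_right]
    rw [h2, h1, neg_neg]
  have hg1 : ‖g‖ = 1 := by
    have hcs : (inner ℝ g (x - y) : ℝ) ≤ ‖g‖ * ‖x - y‖ := real_inner_le_norm g (x - y)
    rw [hinner] at hcs
    nlinarith
  have heq : ‖x - y‖ • g = ‖g‖ • (x - y) := by
    rw [← inner_eq_norm_mul_iff_real, hinner, hg1, one_mul]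
  rw [hg1, one_smul] at heq
  refine ⟨?_, hg1⟩
  have h3 := congrArg (fun v => ‖x - y‖⁻¹ • v) heq
  simpa [smul_smul, inv_mul_cancel₀ hpos.ne'] using h3
end

section
/- Let E be a real Hilbert space, J(u) = (1/2)‖u‖² − I(u) with I ∈ C¹(E), I(0) = 0, and Q ⊆ E a closed subspace. Assume: (J1) there is r > 0 with inf_{‖u‖=r} J(u) > 0; (J2) whenever t_n → +∞, u_n ∈ Q, u_n → u ≠ 0, one has I(t_n u_n)/t_n² → +∞. Then for every u ∈ Q \ {0} the map t ↦ J(tu) attains a positive local maximum at some t₀ > 0, and t₀u lies in the Nehari manifold N = {v ≠ 0 : J'(v)(v) = 0}; in particular N ∩ Q ≠ ∅. -/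
/-- Nonemptiness of the Nehari manifold intersected with `Q`: under (J1) and (J2), for
every `u ∈ Q \ {0}` the map `t ↦ J(tu)` attains a positive local maximum at some
`t₀ > 0`, and `t₀u` lies in the Nehari manifold; in particular `N ∩ Q ≠ ∅`. -/
theorem stmt_14 (E : Type*) [NormedAddCommGroup E] [InnerProductSpace ℝ E]
    [CompleteSpace E]
    (I : E → ℝ) (I' : E → E →L[ℝ] ℝ) (hI : ∀ u, HasFDerivAt I (I' u) u) (hI0 : I 0 = 0)
    (Q : Submodule ℝ E) (hQ : IsClosed (Q : Set E))
    (r : ℝ) (hr : 0 < r) (a : ℝ) (ha : 0 < a)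
    (hJ1 : ∀ u : E, ‖u‖ = r → a ≤ 1/2 * ‖u‖^2 - I u)
    (hJ2 : ∀ (t : ℕ → ℝ) (v : ℕ → E) (u : E), Filter.Tendsto t Filter.atTop Filter.atTop →
      (∀ n, v n ∈ Q) → Filter.Tendsto v Filter.atTop (nhds u) → u ≠ 0 →
      Filter.Tendsto (fun n => I (t n • v n) / (t n)^2) Filter.atTop Filter.atTop) :
    ∀ u ∈ Q, u ≠ 0 → ∃ t₀ : ℝ, 0 < t₀ ∧
      0 < 1/2 * ‖t₀ • u‖^2 - I (t₀ • u) ∧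
      (∃ ε > 0, ∀ t : ℝ, 0 < t → |t - t₀| < ε →
        1/2 * ‖t • u‖^2 - I (t • u) ≤ 1/2 * ‖t₀ • u‖^2 - I (t₀ • u)) ∧
      ‖t₀ • u‖^2 - I' (t₀ • u) (t₀ • u) = 0 := by
  intro u huQ hu0
  have hnu : 0 < ‖u‖ := norm_pos_iff.mpr hu0
  set g : ℝ → ℝ := fun t => 1/2 * t ^ 2 * ‖u‖ ^ 2 - I (t • u) with hg
  have hsq : ∀ t : ℝ, ‖t • u‖ ^ 2 = t ^ 2 * ‖u‖ ^ 2 := by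
    intro t
    rw [norm_smul, mul_pow, Real.norm_eq_abs, sq_abs]
  have hfg : ∀ t : ℝ, 1/2 * ‖t • u‖ ^ 2 - I (t • u) = g t := by
    intro t; simp only [hg, hsq t]; ring
  -- continuity of g
  have hIc : Continuous I := by
    rw [continuous_iff_continuousAt]; exact fun x => (hI x).continuousAt
  have hgc : Continuous g := by
    apply Continuous.sub
    · continuity
    · exact hIc.comp (continuous_id.smul continuous_const)
  -- derivative of g
  have hderiv : ∀ t : ℝ, HasDerivAt g (t * ‖u‖ ^ 2 - I' (t • u) u) t := by
    intro t
    have h1 : HasDerivAt (fun s : ℝ => s • u) u t := by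
      simpa using (hasDerivAt_id t).smul_const u
    have h2 : HasDerivAt (fun s : ℝ => I (s • u)) (I' (t • u) u) t :=
      (hI (t • u)).comp_hasDerivAt t h1
    have h3 : HasDerivAt (fun s : ℝ => 1/2 * s ^ 2 * ‖u‖ ^ 2) (t * ‖u‖ ^ 2) t := by
      have := ((hasDerivAt_pow 2 t).const_mul (1/2 : ℝ)).mul_const (‖u‖ ^ 2)
      exact this.congr_deriv (by rw [show (2 - 1 : ℕ) = 1 from rfl]; push_cast; ring)
    exact h3.sub h2
  -- g tends to -∞
  have hbot : Filter.Tendsto g Filter.atTop Filter.atBot := by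
    rw [Filter.tendsto_iff_seq_tendsto]
    intro tn htn
    have hJ := hJ2 tn (fun _ => u) u htn (fun _ => huQ) tendsto_const_nhds hu0
    have h1 : Filter.Tendsto (fun n => 1/2 * ‖u‖ ^ 2 - I (tn n • u) / (tn n) ^ 2)
        Filter.atTop Filter.atBot := Filter.tendsto_atBot_add_const_left _ _ (Filter.tendsto_neg_atBot_iff.mpr hJ)
    have h2 : Filter.Tendsto (fun n => (tn n) ^ 2) Filter.atTop Filter.atTop :=
      (Filter.tendsto_pow_atTop (by norm_num)).comp htn
    have h3 := h2.atTop_mul_atBot₀ h1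
    apply h3.congr'
    filter_upwards [htn.eventually_ge_atTop 1] with n hn
    have hne : tn n ≠ 0 := by positivity
    simp only [hg, Function.comp]
    field_simp
  -- choose T beyond which g ≤ 0
  set s₀ : ℝ := r / ‖u‖ with hs₀
  have hs₀pos : 0 < s₀ := div_pos hr hnu
  have hgs₀ : a ≤ g s₀ := by
    rw [← hfg]
    apply hJ1
    rw [norm_smul, Real.norm_eq_abs, abs_of_pos hs₀pos, hs₀, div_mul_cancel₀ _ (ne_of_gt hnu)]
  obtain ⟨T, hT⟩ := (hbot.eventually_le_atBot 0).exists_forall_of_atTop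
  set T' : ℝ := max T (s₀ + 1) with hT'
  have hs₀T' : s₀ ≤ T' := le_trans (by linarith) (le_max_right _ _)
  have hT'0 : 0 ≤ T' := le_trans (le_of_lt hs₀pos) hs₀T'
  have hgT' : g T' ≤ 0 := hT T' (le_max_left _ _)
  -- max on [0, T']
  obtain ⟨t₀, ht₀mem, ht₀max⟩ :=
    (isCompact_Icc (a := (0:ℝ)) (b := T')).exists_isMaxOn (Set.nonempty_Icc.mpr hT'0)
      hgc.continuousOn
  have hmaxs₀ : a ≤ g t₀ := le_trans hgs₀ (ht₀max (Set.mem_Icc.mpr ⟨le_of_lt hs₀pos, hs₀T'⟩))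
  have hg0 : g 0 = 0 := by simp [hg, hI0]
  have ht₀pos : 0 < t₀ := by
    rcases lt_or_eq_of_le ht₀mem.1 with h | h
    · exact h
    · exfalso; rw [← h, hg0] at hmaxs₀; linarith
  have ht₀lt : t₀ < T' := by
    rcases lt_or_eq_of_le ht₀mem.2 with h | h
    · exact h
    · exfalso; rw [h] at hmaxs₀; linarith
  refine ⟨t₀, ht₀pos, ?_, ?_, ?_⟩
  · rw [hfg]; linarith
  · refine ⟨min t₀ (T' - t₀), lt_min ht₀pos (by linarith), ?_⟩
    intro t htpos habs
    rw [hfg, hfg]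
    apply ht₀max
    rw [abs_lt] at habs
    have h1 := lt_of_lt_of_le habs.2 (min_le_right _ _)
    exact Set.mem_Icc.mpr ⟨le_of_lt htpos, by linarith⟩
  · -- derivative zero at local max
    have hloc : IsLocalMax g t₀ := by
      have : Set.Icc (0:ℝ) T' ∈ nhds t₀ :=
        Icc_mem_nhds ht₀pos ht₀lt
      exact Filter.eventually_of_mem this ht₀max
    have hz : t₀ * ‖u‖ ^ 2 - I' (t₀ • u) u = 0 := hloc.hasDerivAt_eq_zero (hderiv t₀)
    have hmap : I' (t₀ • u) (t₀ • u) = t₀ * I' (t₀ • u) u := by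
      rw [map_smul]; rfl
    rw [hsq, hmap]
    nlinarith [hz]
end
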